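/- Let K > 0 and let Ψ₁(Y) = Tr(exp Y) for Y symmetric n×n. Then on the domain {Y : Tr exp Y ≤ 2K}, Ψ₁ is 4K-smooth with respect to the operator norm: for any symmetric Y in the domain and any symmetric H, the second directional derivative satisfies D²Ψ₁(Y)[H, H] ≤ 4K ‖H‖_op². -/

import Mathlib

open Matrix

attribute [local instance] Matrix.linftyOpNormedAddCommGroup Matrix.linftyOpNormedRing
  Matrix.linftyOpNormedAlgebra

/-- The ℓ²-operator norm (largest singular value) of a real square matrix. -/
noncomputable def opNorm {n : ℕ} (A : Matrix (Fin n) (Fin n) ℝ) : ℝ :=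
  ‖Matrix.toEuclideanCLM (𝕜 := ℝ) A‖

open Finset Real Nat


private lemma calc_ineq {u : ℝ} (hu : 0 ≤ u) : 2 * (Real.exp u - 1) ≤ u * (Real.exp u + 1) := by
  -- F u = u * exp u + u + 2 - 2 * exp u ≥ 0 on [0, ∞)
  set F : ℝ → ℝ := fun u => u * Real.exp u + u + 2 - 2 * Real.exp u with hF
  set F' : ℝ → ℝ := fun u => u * Real.exp u + 1 - Real.exp u with hF'
  have hd : ∀ v : ℝ, HasDerivAt F (F' v) v := by
    intro v
    have h1 : HasDerivAt (fun u : ℝ => u * Real.exp u) (Real.exp v + v * Real.exp v) v := by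
      simpa using (hasDerivAt_id' v).fun_mul (Real.hasDerivAt_exp v)
    have := ((h1.add (hasDerivAt_id v)).add_const 2).sub ((Real.hasDerivAt_exp v).const_mul 2)
    refine this.congr_deriv ?_
    simp [F']; ring
  have hd' : ∀ v : ℝ, HasDerivAt F' (v * Real.exp v) v := by
    intro v
    have h1 : HasDerivAt (fun u : ℝ => u * Real.exp u) (Real.exp v + v * Real.exp v) v := by
      simpa using (hasDerivAt_id' v).fun_mul (Real.hasDerivAt_exp v)
    have := (h1.add_const 1).sub (Real.hasDerivAt_exp v)
    refine this.congr_deriv ?_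
    ring
  have hF'nonneg : ∀ v ∈ Set.Ici (0:ℝ), 0 ≤ F' v := by
    have hmono : MonotoneOn F' (Set.Ici 0) := by
      apply monotoneOn_of_deriv_nonneg (convex_Ici 0)
        (Continuous.continuousOn (by continuity))
        (fun v _ => (hd' v).differentiableAt.differentiableWithinAt)
      intro v hv
      rw [(hd' v).deriv]
      rw [interior_Ici] at hv
      exact mul_nonneg (le_of_lt hv) (Real.exp_pos v).le
    intro v hv
    have := hmono Set.self_mem_Ici hv (by exact hv)
    simpa [F'] using this
  have hmono : MonotoneOn F (Set.Ici 0) := by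
    apply monotoneOn_of_deriv_nonneg (convex_Ici 0)
      (Continuous.continuousOn (by continuity))
      (fun v _ => (hd v).differentiableAt.differentiableWithinAt)
    intro v hv
    rw [(hd v).deriv]
    exact hF'nonneg v (interior_subset hv)
  have h0 : F 0 = 0 := by simp [F]
  have := hmono Set.self_mem_Ici hu hu
  rw [h0] at this
  simp only [F] at this
  nlinarith [this]

/-- divided difference inequality -/
private lemma dd_ineq {x y : ℝ} (hxy : y < x) :
    (Real.exp x - Real.exp y) / (x - y) ≤ (Real.exp x + Real.exp y) / 2 := by
  have hu : (0:ℝ) ≤ x - y := by linarith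
  have h := calc_ineq hu
  rw [Real.exp_sub] at h
  have hey : 0 < Real.exp y := Real.exp_pos y
  rw [div_le_div_iff₀ (by linarith) (by norm_num)]
  have h2 : 2 * (Real.exp x - Real.exp y) ≤ (x - y) * (Real.exp x + Real.exp y) := by
    have := mul_le_mul_of_nonneg_right h hey.le
    calc 2 * (Real.exp x - Real.exp y) = (2 * (Real.exp x / Real.exp y - 1)) * Real.exp y := by
          field_simp
      _ ≤ ((x - y) * (Real.exp x / Real.exp y + 1)) * Real.exp y := this
      _ = (x - y) * (Real.exp x + Real.exp y) := by field_simp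
  linarith

private lemma summable_G (x y : ℝ) :
    Summable fun m : ℕ => (∑ p ∈ range (m+1), x^p * y^(m-p)) / (m+1) ! := by
  set c : ℝ := max 1 (max |x| |y|) with hc
  have hc1 : (1:ℝ) ≤ c := le_max_left _ _
  have hc0 : (0:ℝ) ≤ c := by linarith
  have hxc : |x| ≤ c := le_trans (le_max_left _ _) (le_max_right _ _)
  have hyc : |y| ≤ c := le_trans (le_max_right _ _) (le_max_right _ _)
  apply Summable.of_norm
  refine Summable.of_nonneg_of_le (fun m => norm_nonneg _) ?_
    (Real.summable_pow_div_factorial c)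
  · intro m
    rw [Real.norm_eq_abs, abs_div, abs_of_pos (by positivity : (0:ℝ) < ((m+1) ! : ℝ))]
    have hG : |∑ p ∈ range (m+1), x^p * y^(m-p)| ≤ (m+1) * c ^ m := by
      calc |∑ p ∈ range (m+1), x^p * y^(m-p)| ≤ ∑ p ∈ range (m+1), |x^p * y^(m-p)| :=
            Finset.abs_sum_le_sum_abs _ _
        _ ≤ ∑ p ∈ range (m+1), c ^ m := by
            apply Finset.sum_le_sum
            intro p hp
            rw [Finset.mem_range] at hp
            have : |x^p * y^(m-p)| = |x|^p * |y|^(m-p) := by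
              rw [abs_mul, abs_pow, abs_pow]
            rw [this]
            calc |x|^p * |y|^(m-p) ≤ c^p * c^(m-p) := by
                  apply mul_le_mul (pow_le_pow_left₀ (abs_nonneg _) hxc p)
                    (pow_le_pow_left₀ (abs_nonneg _) hyc _) (by positivity) (by positivity)
              _ = c ^ m := by rw [← pow_add]; congr 1; omega
        _ = (m+1) * c ^ m := by rw [Finset.sum_const, Finset.card_range]; push_cast; ring
    rw [div_le_div_iff₀ (by positivity) (by positivity)]
    calc |∑ p ∈ range (m+1), x^p * y^(m-p)| * (m !) ≤ ((m+1) * c ^ m) * m ! := by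
          apply mul_le_mul_of_nonneg_right hG (by positivity)
      _ = c ^ m * ((m+1) ! : ℝ) := by
          rw [Nat.factorial_succ]; push_cast; ring

private lemma tsum_shift_exp (x : ℝ) : ∑' m : ℕ, x^(m+1)/((m+1) ! : ℝ) = Real.exp x - 1 := by
  have hs : Summable (fun n : ℕ => x ^ n / n !) := Real.summable_pow_div_factorial x
  have hexp : Real.exp x = ∑' n : ℕ, x ^ n / n ! := by
    rw [Real.exp_eq_exp_ℝ, NormedSpace.exp_eq_tsum_div]
  rw [Summable.tsum_eq_zero_add hs] at hexp
  simp only [pow_zero, Nat.factorial_zero] at hexp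
  push_cast at hexp ⊢
  linarith [hexp]

private lemma phi_le (x y : ℝ) :
    ∑' m : ℕ, (∑ p ∈ range (m+1), x^p * y^(m-p)) / ((m+1) ! : ℝ) ≤ (Real.exp x + Real.exp y)/2 := by
  rcases eq_or_ne x y with rfl | hne
  · have : ∀ m : ℕ, (∑ p ∈ range (m+1), x^p * x^(m-p)) / (m+1) ! = x ^ m / m ! := by
      intro m
      have h1 : ∀ p ∈ range (m+1), x^p * x^(m-p) = x ^ m := by
        intro p hp
        rw [Finset.mem_range] at hp
        rw [← pow_add]
        congr 1
        omega
      rw [Finset.sum_congr rfl h1, Finset.sum_const, Finset.card_range, Nat.factorial_succ]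
      push_cast
      rw [nsmul_eq_mul]
      field_simp
      push_cast; ring
    rw [tsum_congr this]
    have : ∑' m : ℕ, x ^ m / m ! = Real.exp x := by
      rw [Real.exp_eq_exp_ℝ, NormedSpace.exp_eq_tsum_div]
    rw [this]
    linarith
  · have hval : ∑' m : ℕ, (∑ p ∈ range (m+1), x^p * y^(m-p)) / ((m+1) ! : ℝ)
        = (Real.exp x - Real.exp y) / (x - y) := by
      have hxy : x - y ≠ 0 := sub_ne_zero.mpr hne
      rw [eq_div_iff hxy]
      have : (∑' m : ℕ, (∑ p ∈ range (m+1), x^p * y^(m-p)) / (m+1) !) * (x - y)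
          = ∑' m : ℕ, (x^(m+1) - y^(m+1))/(m+1) ! := by
        rw [← tsum_mul_right]
        apply tsum_congr
        intro m
        rw [div_mul_eq_mul_div]
        congr 1
        have := geom_sum₂_mul x y (m+1)
        simpa using this
      rw [this]
      have h1 : Summable (fun m : ℕ => x^(m+1)/(m+1) !) := by
        have := (Real.summable_pow_div_factorial x).comp_injective (add_left_injective 1)
        exact this
      have h2 : Summable (fun m : ℕ => y^(m+1)/(m+1) !) := by
        have := (Real.summable_pow_div_factorial y).comp_injective (add_left_injective 1)
        exact this
      have : ∑' m : ℕ, (x^(m+1) - y^(m+1))/(m+1) !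
          = (∑' m : ℕ, x^(m+1)/(m+1) !) - ∑' m : ℕ, y^(m+1)/(m+1) ! := by
        rw [← Summable.tsum_sub h1 h2]
        apply tsum_congr
        intro m
        ring
      rw [this, tsum_shift_exp, tsum_shift_exp]
      ring
    rw [hval]
    rcases lt_or_gt_of_ne hne with h | h
    · have := dd_ineq h
      have heq : (Real.exp x - Real.exp y) / (x - y) = (Real.exp y - Real.exp x) / (y - x) := by
        rw [div_eq_div_iff (by linarith) (by linarith)]
        ring
      rw [heq]
      linarith [this]
    · exact dd_ineq h

variable {n : ℕ}

private noncomputable def trCLM (n : ℕ) : Matrix (Fin n) (Fin n) ℝ →L[ℝ] ℝ :=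
  LinearMap.toContinuousLinearMap (Matrix.traceLinearMap (Fin n) ℝ ℝ)

private lemma trCLM_apply (M : Matrix (Fin n) (Fin n) ℝ) : trCLM n M = M.trace := rfl

private lemma entry_abs_le (M : Matrix (Fin n) (Fin n) ℝ) (i j : Fin n) : |M i j| ≤ ‖M‖ := by
  have h : ‖M i j‖₊ ≤ ‖M‖₊ := by
    rw [Matrix.linfty_opNNNorm_def]
    calc ‖M i j‖₊ ≤ ∑ j' : Fin n, ‖M i j'‖₊ :=
          Finset.single_le_sum (f := fun j' => ‖M i j'‖₊) (fun _ _ => _root_.zero_le) (Finset.mem_univ j)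
      _ ≤ _ := Finset.le_sup (f := fun i => ∑ j' : Fin n, ‖M i j'‖₊) (Finset.mem_univ i)
  calc |M i j| = (‖M i j‖₊ : ℝ) := rfl
    _ ≤ (‖M‖₊ : ℝ) := by exact_mod_cast h
    _ = ‖M‖ := rfl

private lemma abs_trace_le (M : Matrix (Fin n) (Fin n) ℝ) : |M.trace| ≤ n * ‖M‖ := by
  calc |M.trace| ≤ ∑ i : Fin n, |M i i| := by
        rw [Matrix.trace]
        exact Finset.abs_sum_le_sum_abs _ _
    _ ≤ ∑ _i : Fin n, ‖M‖ := Finset.sum_le_sum fun i _ => entry_abs_le M i i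
    _ = n * ‖M‖ := by rw [Finset.sum_const, Finset.card_univ, Fintype.card_fin, nsmul_eq_mul]

private lemma hasDerivAt_affine (Y H : Matrix (Fin n) (Fin n) ℝ) (t : ℝ) :
    HasDerivAt (fun s : ℝ => Y + s • H) H t := by
  exact (((hasDerivAt_id' t).smul_const H).const_add Y).congr_deriv (one_smul _ _)

private lemma hasDerivAt_matpow (Y H : Matrix (Fin n) (Fin n) ℝ) (k : ℕ) (t : ℝ) :
    HasDerivAt (fun s : ℝ => (Y + s • H) ^ k)
      (∑ i ∈ range k, (Y + t • H) ^ i * H * (Y + t • H) ^ (k - 1 - i)) t := by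
  induction k with
  | zero => simp only [pow_zero, Finset.sum_range_zero]; exact hasDerivAt_const t _
  | succ k ih =>
    have h := ih.fun_mul (hasDerivAt_affine Y H t)
    have heq : (fun s : ℝ => (Y + s • H) ^ k * (Y + s • H)) = fun s : ℝ => (Y + s • H) ^ (k+1) := by
      funext s; rw [← pow_succ]
    rw [heq] at h
    refine h.congr_deriv ?_; symm
    rw [Finset.sum_range_succ]
    congr 1
    · rw [Finset.sum_mul]
      apply Finset.sum_congr rfl
      intro i hi
      rw [Finset.mem_range] at hi
      have h2 : k - 1 - i + 1 = k + 1 - 1 - i := by omega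
      rw [mul_assoc ((Y + t • H) ^ i * H), ← pow_succ, h2]
    · simp

private noncomputable def vv (Y H : Matrix (Fin n) (Fin n) ℝ) (k : ℕ) (t : ℝ) : ℝ :=
  ((Y + t • H) ^ k * H).trace / (k ! : ℝ)

private noncomputable def ww (Y H : Matrix (Fin n) (Fin n) ℝ) (k : ℕ) (t : ℝ) : ℝ :=
  (∑ i ∈ range k, ((Y + t • H) ^ i * H * (Y + t • H) ^ (k - 1 - i) * H).trace) / (k ! : ℝ)

private lemma hasDerivAt_u (Y H : Matrix (Fin n) (Fin n) ℝ) (k : ℕ) (t : ℝ) :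
    HasDerivAt (fun s : ℝ => ((Y + s • H) ^ (k+1)).trace / ((k+1)! : ℝ)) (vv Y H k t) t := by
  have hm := hasDerivAt_matpow Y H (k+1) t
  have htr := ((trCLM n).hasFDerivAt.comp_hasDerivAt t hm).div_const ((k+1)! : ℝ)
  refine htr.congr_deriv ?_; symm
  show vv Y H k t = trCLM n (∑ i ∈ range (k+1), _) / _
  rw [map_sum]
  have : ∀ i ∈ range (k+1),
      trCLM n ((Y + t • H) ^ i * H * (Y + t • H) ^ (k + 1 - 1 - i)) = ((Y + t • H) ^ k * H).trace := by
    intro i hi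
    rw [Finset.mem_range] at hi
    rw [trCLM_apply, Matrix.trace_mul_comm, ← mul_assoc, ← pow_add]
    have h3 : k + 1 - 1 - i + i = k := by omega
    rw [h3]
  rw [Finset.sum_congr rfl this, Finset.sum_const, Finset.card_range, nsmul_eq_mul]
  rw [vv, Nat.factorial_succ]
  push_cast
  have hk : ((k+1 : ℝ)) ≠ 0 := by positivity
  field_simp

private lemma hasDerivAt_v (Y H : Matrix (Fin n) (Fin n) ℝ) (k : ℕ) (t : ℝ) :
    HasDerivAt (vv Y H k) (ww Y H k t) t := by
  have hm := (hasDerivAt_matpow Y H k t).mul_const H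
  have htr := ((trCLM n).hasFDerivAt.comp_hasDerivAt t hm).div_const (k ! : ℝ)
  refine htr.congr_deriv ?_; symm
  show ww Y H k t = trCLM n (_ * H) / _
  rw [ww, Finset.sum_mul, map_sum]
  rfl

private lemma norm_one_le' : ‖(1 : Matrix (Fin n) (Fin n) ℝ)‖ ≤ 1 := by
  rw [← Matrix.diagonal_one, Matrix.linfty_opNorm_diagonal]
  apply pi_norm_le_iff_of_nonneg zero_le_one |>.mpr
  intro i
  simp

private lemma norm_matpow_le {A : Matrix (Fin n) (Fin n) ℝ} {C : ℝ} (hC : ‖A‖ ≤ C)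
    (h1 : 1 ≤ C) : ∀ k : ℕ, ‖A ^ k‖ ≤ C ^ k := by
  intro k
  induction k with
  | zero => rw [pow_zero, pow_zero]; exact norm_one_le'
  | succ k ih =>
    rw [pow_succ, pow_succ]
    calc ‖A ^ k * A‖ ≤ ‖A ^ k‖ * ‖A‖ := norm_mul_le _ _
      _ ≤ C ^ k * C := by
          apply mul_le_mul ih hC (norm_nonneg _) (by positivity)

private lemma summable_ku {C : ℝ} (hC : 0 ≤ C) :
    Summable (fun k : ℕ => (k : ℝ) * C ^ k / (k ! : ℝ)) := by
  rw [← summable_nat_add_iff 1]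
  apply Summable.congr ((Real.summable_pow_div_factorial C).mul_left C)
  intro k
  rw [Nat.factorial_succ]
  push_cast
  have h1 : (0:ℝ) < (k ! : ℝ) := by positivity
  field_simp
  ring

private lemma iteratedDeriv_two_eq (Y H : Matrix (Fin n) (Fin n) ℝ) :
    iteratedDeriv 2 (fun t : ℝ => (NormedSpace.exp (Y + t • H)).trace) 0
      = ∑' k : ℕ, ww Y H k 0 := by
  set C : ℝ := ‖Y‖ + 2 * ‖H‖ + 1 with hCdef
  have hC1 : (1:ℝ) ≤ C := by
    have := norm_nonneg Y; have := norm_nonneg H; simp only [hCdef]; linarith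
  have hC0 : (0:ℝ) ≤ C := by linarith
  have hmem : (0:ℝ) ∈ Set.Ioo (-2:ℝ) 2 := by norm_num
  have hA : ∀ t ∈ Set.Ioo (-2:ℝ) 2, ‖Y + t • H‖ ≤ C := by
    intro t ht
    calc ‖Y + t • H‖ ≤ ‖Y‖ + ‖t • H‖ := norm_add_le _ _
      _ ≤ ‖Y‖ + 2 * ‖H‖ := by
          rw [norm_smul]
          have h2 : ‖t‖ ≤ 2 := by
            rw [Real.norm_eq_abs, abs_le]
            exact ⟨ht.1.le, ht.2.le⟩
          have := mul_le_mul_of_nonneg_right h2 (norm_nonneg H)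
          linarith
      _ ≤ C := by linarith
  -- summability of the base series at any t
  have hsum₀ : ∀ t : ℝ, Summable (fun k : ℕ => ((Y + t • H) ^ k).trace / (k ! : ℝ)) := by
    intro t
    have h1 := (NormedSpace.expSeries_summable' (𝕂 := ℝ) (Y + t • H)).mapL (trCLM n)
    apply Summable.congr h1
    intro k
    rw [_root_.map_smul, smul_eq_mul, trCLM_apply, inv_mul_eq_div]
  -- bounds for vv
  have hvb : ∀ k : ℕ, ∀ t ∈ Set.Ioo (-2:ℝ) 2,
      ‖vv Y H k t‖ ≤ (n * ‖H‖) * (C ^ k / (k ! : ℝ)) := by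
    intro k t ht
    rw [vv, Real.norm_eq_abs, abs_div, abs_of_pos (by positivity : (0:ℝ) < (k ! : ℝ))]
    rw [div_le_iff₀ (by positivity)]
    calc |((Y + t • H) ^ k * H).trace| ≤ n * ‖(Y + t • H) ^ k * H‖ := abs_trace_le _
      _ ≤ n * (C ^ k * ‖H‖) := by
          apply mul_le_mul_of_nonneg_left _ (by positivity)
          calc ‖(Y + t • H) ^ k * H‖ ≤ ‖(Y + t • H) ^ k‖ * ‖H‖ := norm_mul_le _ _
            _ ≤ C ^ k * ‖H‖ := by
                apply mul_le_mul_of_nonneg_right (norm_matpow_le (hA t ht) hC1 k) (norm_nonneg _)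
      _ = (n * ‖H‖) * (C ^ k / (k ! : ℝ)) * (k ! : ℝ) := by
          field_simp
  -- bounds for ww
  have hwb : ∀ k : ℕ, ∀ t ∈ Set.Ioo (-2:ℝ) 2,
      ‖ww Y H k t‖ ≤ (n * ‖H‖ ^ 2) * ((k : ℝ) * C ^ k / (k ! : ℝ)) := by
    intro k t ht
    rw [ww, Real.norm_eq_abs, abs_div, abs_of_pos (by positivity : (0:ℝ) < (k ! : ℝ))]
    rw [div_le_iff₀ (by positivity)]
    have hterm : ∀ i ∈ range k,
        |((Y + t • H) ^ i * H * (Y + t • H) ^ (k - 1 - i) * H).trace| ≤ n * (C ^ k * ‖H‖ ^ 2) := by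
      intro i hi
      rw [Finset.mem_range] at hi
      have m1 := norm_mul_le ((Y + t • H) ^ i * H * (Y + t • H) ^ (k - 1 - i)) H
      have m2 := norm_mul_le ((Y + t • H) ^ i * H) ((Y + t • H) ^ (k - 1 - i))
      have m3 := norm_mul_le ((Y + t • H) ^ i) H
      have g1 := norm_matpow_le (hA t ht) hC1 i
      have g2 := norm_matpow_le (hA t ht) hC1 (k - 1 - i)
      have hpow : C ^ i * C ^ (k - 1 - i) ≤ C ^ k := by
        rw [← pow_add]
        apply pow_le_pow_right₀ hC1
        omega
      have hnorm : ‖(Y + t • H) ^ i * H * (Y + t • H) ^ (k - 1 - i) * H‖ ≤ C ^ k * ‖H‖ ^ 2 := by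
        calc ‖(Y + t • H) ^ i * H * (Y + t • H) ^ (k - 1 - i) * H‖
            ≤ ‖(Y + t • H) ^ i * H * (Y + t • H) ^ (k - 1 - i)‖ * ‖H‖ := m1
          _ ≤ (‖(Y + t • H) ^ i * H‖ * ‖(Y + t • H) ^ (k - 1 - i)‖) * ‖H‖ :=
              mul_le_mul_of_nonneg_right m2 (norm_nonneg H)
          _ ≤ ((‖(Y + t • H) ^ i‖ * ‖H‖) * ‖(Y + t • H) ^ (k - 1 - i)‖) * ‖H‖ :=
              mul_le_mul_of_nonneg_right
                (mul_le_mul_of_nonneg_right m3 (norm_nonneg _)) (norm_nonneg H)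
          _ ≤ ((C ^ i * ‖H‖) * C ^ (k - 1 - i)) * ‖H‖ := by
              apply mul_le_mul_of_nonneg_right _ (norm_nonneg H)
              exact mul_le_mul (mul_le_mul_of_nonneg_right g1 (norm_nonneg H)) g2
                (norm_nonneg _) (by positivity)
          _ = (C ^ i * C ^ (k - 1 - i)) * ‖H‖ ^ 2 := by ring
          _ ≤ C ^ k * ‖H‖ ^ 2 := mul_le_mul_of_nonneg_right hpow (by positivity)
      calc |((Y + t • H) ^ i * H * (Y + t • H) ^ (k - 1 - i) * H).trace|
          ≤ n * ‖(Y + t • H) ^ i * H * (Y + t • H) ^ (k - 1 - i) * H‖ := abs_trace_le _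
        _ ≤ n * (C ^ k * ‖H‖ ^ 2) := mul_le_mul_of_nonneg_left hnorm (by positivity)
    calc |∑ i ∈ range k, ((Y + t • H) ^ i * H * (Y + t • H) ^ (k - 1 - i) * H).trace|
        ≤ ∑ i ∈ range k, |((Y + t • H) ^ i * H * (Y + t • H) ^ (k - 1 - i) * H).trace| :=
          Finset.abs_sum_le_sum_abs _ _
      _ ≤ ∑ _i ∈ range k, n * (C ^ k * ‖H‖ ^ 2) := Finset.sum_le_sum hterm
      _ = k * (n * (C ^ k * ‖H‖ ^ 2)) := by
          rw [Finset.sum_const, Finset.card_range, nsmul_eq_mul]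
      _ = (n * ‖H‖ ^ 2) * ((k : ℝ) * C ^ k / (k ! : ℝ)) * (k ! : ℝ) := by
          field_simp
  have hu1 : Summable (fun k : ℕ => (n * ‖H‖) * (C ^ k / (k ! : ℝ))) :=
    (Real.summable_pow_div_factorial C).mul_left _
  have hu2 : Summable (fun k : ℕ => (n * ‖H‖ ^ 2) * ((k : ℝ) * C ^ k / (k ! : ℝ))) :=
    (summable_ku hC0).mul_left _
  -- the function F equals a constant plus shifted tsum
  have hFeq : (fun t : ℝ => (NormedSpace.exp (Y + t • H)).trace)
      = fun t : ℝ => (1 : Matrix (Fin n) (Fin n) ℝ).trace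
          + ∑' k : ℕ, ((Y + t • H) ^ (k+1)).trace / (((k+1)) ! : ℝ) := by
    funext t
    have h1 : (NormedSpace.exp (Y + t • H)).trace
        = ∑' k : ℕ, ((Y + t • H) ^ k).trace / (k ! : ℝ) := by
      rw [NormedSpace.exp_eq_tsum ℝ]
      rw [show ((∑' k : ℕ, ((k !)⁻¹ : ℝ) • (Y + t • H) ^ k).trace)
          = trCLM n (∑' k : ℕ, ((k !)⁻¹ : ℝ) • (Y + t • H) ^ k) from rfl]
      rw [(trCLM n).map_tsum (NormedSpace.expSeries_summable' (𝕂 := ℝ) (Y + t • H))]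
      apply tsum_congr
      intro k
      rw [_root_.map_smul, smul_eq_mul, trCLM_apply, inv_mul_eq_div]
    rw [h1, Summable.tsum_eq_zero_add (hsum₀ t)]
    simp
  -- first derivative
  have hshift : ∀ t : ℝ, Summable (fun k : ℕ => ((Y + t • H) ^ (k+1)).trace / (((k+1)) ! : ℝ)) := by
    intro t
    exact (hsum₀ t).comp_injective (add_left_injective 1)
  have hsumv : ∀ t ∈ Set.Ioo (-2:ℝ) 2, Summable (fun k : ℕ => vv Y H k t) := by
    intro t ht
    apply Summable.of_norm
    exact Summable.of_nonneg_of_le (fun k => norm_nonneg _) (fun k => hvb k t ht) hu1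
  have hFd : ∀ t ∈ Set.Ioo (-2:ℝ) 2,
      HasDerivAt (fun s : ℝ => (NormedSpace.exp (Y + s • H)).trace)
        (∑' k : ℕ, vv Y H k t) t := by
    intro t ht
    rw [hFeq]
    have hG : HasDerivAt (fun s : ℝ => ∑' k : ℕ, ((Y + s • H) ^ (k+1)).trace / (((k+1)) ! : ℝ))
        (∑' k : ℕ, vv Y H k t) t := by
      apply hasDerivAt_tsum_of_isPreconnected hu1 isOpen_Ioo (convex_Ioo (-2:ℝ) 2).isPreconnected
        (fun k y _ => hasDerivAt_u Y H k y) (fun k y hy => hvb k y hy) hmem (hshift 0) ht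
    exact hG.const_add _
  have hVd : HasDerivAt (fun t : ℝ => ∑' k : ℕ, vv Y H k t) (∑' k : ℕ, ww Y H k 0) 0 := by
    apply hasDerivAt_tsum_of_isPreconnected hu2 isOpen_Ioo (convex_Ioo (-2:ℝ) 2).isPreconnected
      (fun k y _ => hasDerivAt_v Y H k y) (fun k y hy => hwb k y hy) hmem (hsumv 0 hmem) hmem
  rw [show (2:ℕ) = 1 + 1 from rfl, iteratedDeriv_succ, iteratedDeriv_one]
  have h1 : deriv (fun t : ℝ => (NormedSpace.exp (Y + t • H)).trace)
      =ᶠ[nhds 0] fun t : ℝ => ∑' k : ℕ, vv Y H k t := by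
    apply Filter.eventuallyEq_of_mem (Ioo_mem_nhds (by norm_num : (-2:ℝ) < 0) (by norm_num : (0:ℝ) < 2))
    intro t ht
    exact (hFd t ht).deriv
  rw [h1.deriv_eq, hVd.deriv]

section Spectral

variable {Y H : Matrix (Fin n) (Fin n) ℝ}

private lemma conj_pow_eq (U D : Matrix (Fin n) (Fin n) ℝ) (hU1 : star U * U = 1)
    (hU2 : U * star U = 1) (p : ℕ) :
    (U * D * star U) ^ p = U * D ^ p * star U := by
  induction p with
  | zero => simp [hU2]
  | succ p ih =>
    rw [pow_succ, ih, pow_succ]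
    calc U * D ^ p * star U * (U * D * star U)
        = U * D ^ p * (star U * U) * D * star U := by
          simp only [Matrix.mul_assoc]
      _ = U * (D ^ p * D) * star U := by rw [hU1]; simp only [Matrix.mul_assoc, Matrix.one_mul]

private lemma trace_conj_eq (U M : Matrix (Fin n) (Fin n) ℝ) (hU1 : star U * U = 1) :
    (U * M * star U).trace = M.trace := by
  rw [Matrix.trace_mul_comm, ← Matrix.mul_assoc, hU1, Matrix.one_mul]

private lemma trace_formula (U : Matrix (Fin n) (Fin n) ℝ) (lam : Fin n → ℝ)
    (H : Matrix (Fin n) (Fin n) ℝ) (hU1 : star U * U = 1) (hU2 : U * star U = 1)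
    (p q : ℕ) :
    (((U * Matrix.diagonal lam * star U) ^ p) * H * ((U * Matrix.diagonal lam * star U) ^ q) * H).trace
      = ∑ a : Fin n, ∑ b : Fin n,
          ((star U * H * U) a b * (star U * H * U) b a) * (lam a ^ p * lam b ^ q) := by
  set B := star U * H * U with hB
  have hU1' : ∀ X : Matrix (Fin n) (Fin n) ℝ, star U * (U * X) = X := by
    intro X; rw [← Matrix.mul_assoc, hU1, Matrix.one_mul]
  have hU2' : ∀ X : Matrix (Fin n) (Fin n) ℝ, U * (star U * X) = X := by
    intro X; rw [← Matrix.mul_assoc, hU2, Matrix.one_mul]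
  have h1 : ((U * Matrix.diagonal lam * star U) ^ p) * H * ((U * Matrix.diagonal lam * star U) ^ q) * H
      = U * (Matrix.diagonal (fun a => lam a ^ p) * B * Matrix.diagonal (fun a => lam a ^ q) * B) * star U := by
    rw [conj_pow_eq U _ hU1 hU2, conj_pow_eq U _ hU1 hU2, Matrix.diagonal_pow, Matrix.diagonal_pow, hB]
    simp only [Matrix.mul_assoc, hU1', hU2', hU2, Matrix.mul_one]
    rfl
  rw [h1, trace_conj_eq _ _ hU1]
  have h2 : ∀ a : Fin n, (Matrix.diagonal (fun a => lam a ^ p) * B * Matrix.diagonal (fun a => lam a ^ q) * B) a a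
      = ∑ b : Fin n, (B a b * B b a) * (lam a ^ p * lam b ^ q) := by
    intro a
    rw [Matrix.mul_apply]
    apply Finset.sum_congr rfl
    intro b _
    rw [Matrix.mul_diagonal, Matrix.diagonal_mul]
    ring
  rw [Matrix.trace]
  apply Finset.sum_congr rfl
  intro a _
  exact h2 a

private lemma trace_exp_eq (U : Matrix (Fin n) (Fin n) ℝ) (lam : Fin n → ℝ)
    (hU1 : star U * U = 1) (hU2 : U * star U = 1) :
    (NormedSpace.exp (U * Matrix.diagonal lam * star U)).trace = ∑ a, Real.exp (lam a) := by
  have hunit : IsUnit U := ⟨⟨U, star U, hU2, hU1⟩, rfl⟩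
  have hinv : U⁻¹ = star U := Matrix.inv_eq_right_inv hU2
  rw [← hinv, Matrix.exp_conj U _ hunit, hinv, trace_conj_eq _ _ hU1,
    Matrix.exp_diagonal, Matrix.trace_diagonal]
  apply Finset.sum_congr rfl
  intro a _
  rw [Pi.exp_def, Real.exp_eq_exp_ℝ]

private lemma col_bound (hH : H.IsSymm) (U : Matrix (Fin n) (Fin n) ℝ)
    (hU1 : star U * U = 1) (hU2 : U * star U = 1) (a : Fin n) :
    ∑ b, ((star U * H * U) a b)^2 ≤ opNorm H ^ 2 := by
  have hstar : ∀ M : Matrix (Fin n) (Fin n) ℝ, star M = Mᵀ := fun M => by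
    rw [Matrix.star_eq_conjTranspose, Matrix.conjTranspose_eq_transpose_of_trivial]
  set B := star U * H * U with hBdef
  have hBsymm : Bᵀ = B := by
    rw [hBdef, hstar, Matrix.transpose_mul, Matrix.transpose_mul, Matrix.transpose_transpose, hH]
    rw [Matrix.mul_assoc]
  set v : Fin n → ℝ := fun c => U c a with hv
  set w : Fin n → ℝ := H *ᵥ v with hw
  have step1 : ∑ b, (B a b)^2 = (B * B) a a := by
    rw [Matrix.mul_apply]
    apply Finset.sum_congr rfl
    intro b _
    have : B b a = B a b := by rw [← hBsymm, Matrix.transpose_apply, hBsymm]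
    rw [this]; ring
  have step2 : B * B = star U * (H * H) * U := by
    rw [hBdef]
    calc star U * H * U * (star U * H * U)
        = star U * H * (U * star U) * H * U := by simp only [Matrix.mul_assoc]
      _ = star U * (H * H) * U := by rw [hU2]; simp only [Matrix.mul_assoc, Matrix.one_mul]
  have step3 : (star U * (H * H) * U) a a = v ⬝ᵥ ((H * H) *ᵥ v) := by
    rw [hstar, Matrix.mul_assoc, Matrix.mul_apply]
    simp only [dotProduct]
    apply Finset.sum_congr rfl
    intro c _
    simp [Matrix.transpose_apply, Matrix.mul_apply, Matrix.mulVec, dotProduct, hv]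
  have step4 : v ⬝ᵥ ((H * H) *ᵥ v) = w ⬝ᵥ w := by
    rw [← Matrix.mulVec_mulVec, dotProduct_mulVec, ← Matrix.mulVec_transpose, hH, ← hw]
  have step6 : v ⬝ᵥ v = 1 := by
    have := congr_fun (congr_fun hU1 a) a
    rw [Matrix.one_apply_eq] at this
    rw [← this, hstar, Matrix.mul_apply]
    apply Finset.sum_congr rfl
    intro c _
    simp [Matrix.transpose_apply, hv]
  have step5 : w ⬝ᵥ w ≤ opNorm H ^ 2 * (v ⬝ᵥ v) := by
    set ev : EuclideanSpace ℝ (Fin n) := (WithLp.equiv 2 (Fin n → ℝ)).symm v with hev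
    set ew : EuclideanSpace ℝ (Fin n) := (WithLp.equiv 2 (Fin n → ℝ)).symm w with hewd
    have hclm : Matrix.toEuclideanCLM (𝕜 := ℝ) H ev = ew := by
      rw [hev, hewd, hw]; rfl
    have key : ‖ew‖ ≤ opNorm H * ‖ev‖ := by
      rw [← hclm]
      exact (Matrix.toEuclideanCLM (𝕜 := ℝ) H).le_opNorm ev
    have hnw : w ⬝ᵥ w = ‖ew‖ ^ 2 := by
      rw [EuclideanSpace.norm_eq, Real.sq_sqrt (by positivity)]
      simp only [dotProduct, WithLp.equiv_symm_apply, PiLp.toLp_apply, Real.norm_eq_abs, sq_abs, ew]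
      apply Finset.sum_congr rfl; intro b _; ring
    have hnv : v ⬝ᵥ v = ‖ev‖ ^ 2 := by
      rw [EuclideanSpace.norm_eq, Real.sq_sqrt (by positivity)]
      simp only [dotProduct, WithLp.equiv_symm_apply, PiLp.toLp_apply, Real.norm_eq_abs, sq_abs, ev]
      apply Finset.sum_congr rfl; intro b _; ring
    rw [hnw, hnv, ← mul_pow]
    apply pow_le_pow_left₀ (norm_nonneg _) key
  calc ∑ b, (B a b)^2 = w ⬝ᵥ w := by rw [step1, step2, step3, step4]
    _ ≤ opNorm H ^ 2 * (v ⬝ᵥ v) := step5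
    _ = opNorm H ^ 2 := by rw [step6, mul_one]

private lemma summable_g (x y : ℝ) :
    Summable (fun k : ℕ => (∑ i ∈ range k, x^i * y^(k-1-i)) / (k ! : ℝ)) := by
  apply (summable_nat_add_iff 1).mp
  apply Summable.congr (summable_G x y)
  intro m
  simp only [Nat.add_sub_cancel]

private lemma tsum_g_le (x y : ℝ) :
    ∑' k : ℕ, (∑ i ∈ range k, x^i * y^(k-1-i)) / (k ! : ℝ) ≤ (Real.exp x + Real.exp y)/2 := by
  rw [Summable.tsum_eq_zero_add (summable_g x y)]
  simp only [Finset.range_zero, Finset.sum_empty, Nat.factorial_zero, Nat.cast_one, zero_div,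
    zero_add, Nat.add_sub_cancel]
  exact phi_le x y

private lemma tsum_g_nonneg_summable (x y c : ℝ) :
    Summable (fun k : ℕ => c * ((∑ i ∈ range k, x^i * y^(k-1-i)) / (k ! : ℝ))) :=
  (summable_g x y).mul_left c

/-- Let `K > 0` and `Ψ₁(Y) = Tr exp(Y)`. On the domain `{Y : Tr exp Y ≤ 2K}`, `Ψ₁`
is `4K`-smooth with respect to the operator norm: for symmetric `Y` in the domain
and symmetric `H`, the second directional derivative of `Ψ₁` at `Y` along `H`,
i.e. `d²/dt² Tr exp(Y + tH)` at `t = 0`, is at most `4K ‖H‖_op²`. -/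
theorem stmt_13 {n : ℕ} (K : ℝ) (hK : 0 < K)
    (Y H : Matrix (Fin n) (Fin n) ℝ) (hY : Y.IsSymm) (hH : H.IsSymm)
    (hdom : (NormedSpace.exp Y).trace ≤ 2 * K) :
    iteratedDeriv 2 (fun t : ℝ => (NormedSpace.exp (Y + t • H)).trace) 0 ≤
      4 * K * opNorm H ^ 2 := by
  have hY' : Y.IsHermitian := by
    rw [Matrix.IsHermitian, Matrix.conjTranspose_eq_transpose_of_trivial]; exact hY
  set U : Matrix (Fin n) (Fin n) ℝ := (hY'.eigenvectorUnitary : Matrix (Fin n) (Fin n) ℝ)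
    with hUdef
  set lam : Fin n → ℝ := hY'.eigenvalues with hlam
  have hU2 : U * star U = 1 := Matrix.mem_unitaryGroup_iff.mp (hY'.eigenvectorUnitary).2
  have hU1 : star U * U = 1 := Matrix.mem_unitaryGroup_iff'.mp (hY'.eigenvectorUnitary).2
  have hspec : Y = U * Matrix.diagonal lam * star U := by
    have h := hY'.spectral_theorem
    rw [RCLike.ofReal_real_eq_id] at h
    simpa using h
  set B : Matrix (Fin n) (Fin n) ℝ := star U * H * U with hBdef
  have hstar : ∀ M : Matrix (Fin n) (Fin n) ℝ, star M = Mᵀ := fun M => by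
    rw [Matrix.star_eq_conjTranspose, Matrix.conjTranspose_eq_transpose_of_trivial]
  have hBsymm : ∀ a b, B b a = B a b := by
    intro a b
    have hBt : Bᵀ = B := by
      rw [hBdef, hstar, Matrix.transpose_mul, Matrix.transpose_mul, Matrix.transpose_transpose,
        hH, Matrix.mul_assoc]
    conv_lhs => rw [← hBt, Matrix.transpose_apply]
  set E : Fin n → ℝ := fun a => Real.exp (lam a) with hE
  set psi : Fin n → Fin n → ℝ :=
    fun a b => ∑' k : ℕ, (∑ i ∈ range k, lam a ^ i * lam b ^ (k-1-i)) / (k ! : ℝ) with hpsi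
  -- rewrite the second derivative
  rw [iteratedDeriv_two_eq Y H]
  have hww : ∀ k : ℕ, ww Y H k 0
      = ∑ a, ∑ b, (B a b)^2 * ((∑ i ∈ range k, lam a ^ i * lam b ^ (k-1-i)) / (k ! : ℝ)) := by
    intro k
    rw [ww]
    simp only [zero_smul, add_zero]
    have h1 : ∀ i ∈ range k, (Y ^ i * H * Y ^ (k-1-i) * H).trace
        = ∑ a, ∑ b, ((B a b) * (B b a)) * (lam a ^ i * lam b ^ (k-1-i)) := by
      intro i _
      conv_lhs => rw [hspec]
      exact trace_formula U lam H hU1 hU2 i (k-1-i)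
    rw [Finset.sum_congr rfl h1]
    rw [Finset.sum_comm]
    rw [Finset.sum_div]
    apply Finset.sum_congr rfl
    intro a _
    rw [Finset.sum_comm, Finset.sum_div]
    apply Finset.sum_congr rfl
    intro b _
    rw [← Finset.mul_sum, hBsymm a b, mul_div_assoc]
    ring_nf
  -- sum the series
  have hsum_eq : ∑' k : ℕ, ww Y H k 0 = ∑ a, ∑ b, (B a b)^2 * psi a b := by
    rw [tsum_congr hww]
    rw [Summable.tsum_finsetSum (fun a _ => ?_)]
    · apply Finset.sum_congr rfl
      intro a _
      rw [Summable.tsum_finsetSum (fun b _ => tsum_g_nonneg_summable _ _ _)]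
      apply Finset.sum_congr rfl
      intro b _
      rw [hpsi, tsum_mul_left]
    · exact summable_sum (fun b _ => tsum_g_nonneg_summable _ _ _)
  rw [hsum_eq]
  -- bound psi
  have hpsile : ∀ a b, psi a b ≤ (E a + E b)/2 := fun a b => tsum_g_le _ _
  have hstep1 : ∑ a, ∑ b, (B a b)^2 * psi a b ≤ ∑ a, ∑ b, (B a b)^2 * ((E a + E b)/2) := by
    apply Finset.sum_le_sum
    intro a _
    apply Finset.sum_le_sum
    intro b _
    exact mul_le_mul_of_nonneg_left (hpsile a b) (sq_nonneg _)
  have hstep2 : ∑ a, ∑ b, (B a b)^2 * ((E a + E b)/2) = ∑ a, E a * ∑ b, (B a b)^2 := by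
    have hsplit : ∀ a b : Fin n, (B a b)^2 * ((E a + E b)/2)
        = (B a b)^2 * E a / 2 + (B a b)^2 * E b / 2 := by intro a b; ring
    simp only [hsplit, Finset.sum_add_distrib]
    have hswap : ∑ a, ∑ b, (B a b)^2 * E b / 2 = ∑ a, ∑ b, (B a b)^2 * E a / 2 := by
      rw [Finset.sum_comm]
      apply Finset.sum_congr rfl
      intro a _
      apply Finset.sum_congr rfl
      intro b _
      rw [hBsymm a b]
    rw [hswap]
    rw [← Finset.sum_add_distrib]
    apply Finset.sum_congr rfl
    intro a _
    rw [← Finset.sum_add_distrib, Finset.mul_sum]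
    apply Finset.sum_congr rfl
    intro b _
    ring
  have hstep3 : ∑ a, E a * ∑ b, (B a b)^2 ≤ (∑ a, E a) * opNorm H ^ 2 := by
    rw [Finset.sum_mul]
    apply Finset.sum_le_sum
    intro a _
    exact mul_le_mul_of_nonneg_left (col_bound hH U hU1 hU2 a) (Real.exp_pos _).le
  have htr : (∑ a, E a) = (NormedSpace.exp Y).trace := by
    rw [hspec, trace_exp_eq U lam hU1 hU2]
  have hfinal : (∑ a, E a) * opNorm H ^ 2 ≤ 4 * K * opNorm H ^ 2 := by
    apply mul_le_mul_of_nonneg_right _ (sq_nonneg _)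
    rw [htr]
    linarith
  linarith [hstep1, hstep3, hfinal, le_of_eq hstep2]
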